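/- Let p, q be real numbers with 0 ≤ q < p² and √q < p, and set J_{p,q} := (−√(p−√q), √(p−√q)) and h_{p,q}(s) := √(p − s² + √((p − s²)² − q)). Then on J_{p,q} both y = h_{p,q} and y = 1/h_{p,q} are twice differentiable and satisfy the ordinary differential equation s·((s²−p)²−q)·y''(s) + (s⁴−p²+q)·y'(s) − s³·y(s) = 0. -/

import Mathlib

open Real Filter Set Topology

lemma aux_ode (p q : ℝ) (hq0 : 0 ≤ q) (hp : Real.sqrt q < p) (ε : ℝ) (hε : ε ^ 2 = 1)
    (y : ℝ → ℝ)
    (hy : ∀ t ∈ Set.Ioo (-Real.sqrt (p - Real.sqrt q)) (Real.sqrt (p - Real.sqrt q)),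
      HasDerivAt y (ε * t * y t / Real.sqrt ((p - t ^ 2) ^ 2 - q)) t) :
    ∀ s ∈ Set.Ioo (-Real.sqrt (p - Real.sqrt q)) (Real.sqrt (p - Real.sqrt q)),
      DifferentiableAt ℝ y s ∧ DifferentiableAt ℝ (deriv y) s ∧
        s * ((s ^ 2 - p) ^ 2 - q) * deriv (deriv y) s
          + (s ^ 4 - p ^ 2 + q) * deriv y s - s ^ 3 * y s = 0 := by
  have wpos : ∀ t ∈ Set.Ioo (-Real.sqrt (p - Real.sqrt q)) (Real.sqrt (p - Real.sqrt q)),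
      0 < (p - t ^ 2) ^ 2 - q := by
    intro t ht
    have h1 : |t| < Real.sqrt (p - Real.sqrt q) := abs_lt.mpr ⟨ht.1, ht.2⟩
    have h2 : t ^ 2 < p - Real.sqrt q := by
      calc t ^ 2 = |t| ^ 2 := (sq_abs t).symm
        _ < Real.sqrt (p - Real.sqrt q) ^ 2 :=
            pow_lt_pow_left₀ h1 (abs_nonneg t) (by norm_num)
        _ = p - Real.sqrt q := sq_sqrt (by linarith [Real.sqrt_nonneg q])
    have h3 : Real.sqrt q < p - t ^ 2 := by linarith
    nlinarith [sq_sqrt hq0, Real.sqrt_nonneg q]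
  intro s hs
  set G : ℝ → ℝ := fun t => ε * t * y t / Real.sqrt ((p - t ^ 2) ^ 2 - q) with hG
  have hev : deriv y =ᶠ[𝓝 s] G := by
    filter_upwards [isOpen_Ioo.mem_nhds hs] with t ht
    exact (hy t ht).deriv
  -- second derivative
  have hWpos : 0 < Real.sqrt ((p - s ^ 2) ^ 2 - q) := Real.sqrt_pos.mpr (wpos s hs)
  have hW2 : Real.sqrt ((p - s ^ 2) ^ 2 - q) ^ 2 = (p - s ^ 2) ^ 2 - q :=
    sq_sqrt (wpos s hs).le
  have hnum : HasDerivAt (fun t => ε * t * y t)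
      ((ε * 1) * y s + (ε * s) * (ε * s * y s / Real.sqrt ((p - s ^ 2) ^ 2 - q))) s := by
    exact (((hasDerivAt_id s).const_mul ε).mul (hy s hs))
  have hu : HasDerivAt (fun t : ℝ => p - t ^ 2) (-(2 * s ^ 1)) s := by
    simpa using ((hasDerivAt_pow 2 s).const_sub p)
  have hw : HasDerivAt (fun t : ℝ => (p - t ^ 2) ^ 2 - q)
      ((2 : ℕ) * (p - s ^ 2) ^ 1 * (-(2 * s ^ 1))) s := (hu.pow 2).sub_const q
  have hsw : HasDerivAt (fun t : ℝ => Real.sqrt ((p - t ^ 2) ^ 2 - q))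
      (((2 : ℕ) * (p - s ^ 2) ^ 1 * (-(2 * s ^ 1))) / (2 * Real.sqrt ((p - s ^ 2) ^ 2 - q))) s :=
    hw.sqrt (wpos s hs).ne'
  have hGd : HasDerivAt G
      ((((ε * 1) * y s + (ε * s) * (ε * s * y s / Real.sqrt ((p - s ^ 2) ^ 2 - q)))
          * Real.sqrt ((p - s ^ 2) ^ 2 - q)
        - (ε * s * y s) * (((2 : ℕ) * (p - s ^ 2) ^ 1 * (-(2 * s ^ 1)))
            / (2 * Real.sqrt ((p - s ^ 2) ^ 2 - q))))
        / Real.sqrt ((p - s ^ 2) ^ 2 - q) ^ 2) s :=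
    hnum.div hsw hWpos.ne'
  have hdy : deriv y s = G s := (hy s hs).deriv
  have hdd : deriv (deriv y) s = deriv G s := hev.deriv_eq
  refine ⟨(hy s hs).differentiableAt, ?_, ?_⟩
  · exact hev.differentiableAt_iff.mpr hGd.differentiableAt
  · rw [hdd, hGd.deriv, hdy]
    simp only [hG]
    set W := Real.sqrt ((p - s ^ 2) ^ 2 - q) with hWdef
    have e1 : (s ^ 2 - p) ^ 2 - q = W ^ 2 := by rw [hW2]; ring
    rw [e1]
    field_simp
    linear_combination (s*ε*y s) * hW2 + (s^3*y s*W) * hε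

/-- For `0 ≤ q < p²` with `√q < p`, on
`J_{p,q} = (−√(p−√q), √(p−√q))` both `h_{p,q}` and `1/h_{p,q}`, where
`h_{p,q}(s) = √(p − s² + √((p − s²)² − q))`, are twice differentiable and satisfy
`s((s²−p)²−q) y'' + (s⁴−p²+q) y' − s³ y = 0`. -/
theorem stmt_5 (p q : ℝ) (hq0 : 0 ≤ q) (hq : q < p ^ 2) (hp : Real.sqrt q < p)
    (h : ℝ → ℝ)
    (hdef : ∀ s, h s = Real.sqrt (p - s ^ 2 + Real.sqrt ((p - s ^ 2) ^ 2 - q))) :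
    ∀ s ∈ Set.Ioo (-Real.sqrt (p - Real.sqrt q)) (Real.sqrt (p - Real.sqrt q)),
      (DifferentiableAt ℝ h s ∧ DifferentiableAt ℝ (deriv h) s ∧
        s * ((s ^ 2 - p) ^ 2 - q) * deriv (deriv h) s
          + (s ^ 4 - p ^ 2 + q) * deriv h s - s ^ 3 * h s = 0) ∧
      (DifferentiableAt ℝ (fun t => (h t)⁻¹) s ∧
        DifferentiableAt ℝ (deriv fun t => (h t)⁻¹) s ∧
        s * ((s ^ 2 - p) ^ 2 - q) * deriv (deriv fun t => (h t)⁻¹) s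
          + (s ^ 4 - p ^ 2 + q) * deriv (fun t => (h t)⁻¹) s - s ^ 3 * (h s)⁻¹ = 0) := by
  have key : ∀ t ∈ Set.Ioo (-Real.sqrt (p - Real.sqrt q)) (Real.sqrt (p - Real.sqrt q)),
      Real.sqrt q < p - t ^ 2 := by
    intro t ht
    have h1 : |t| < Real.sqrt (p - Real.sqrt q) := abs_lt.mpr ⟨ht.1, ht.2⟩
    have h2 : t ^ 2 < p - Real.sqrt q := by
      calc t ^ 2 = |t| ^ 2 := (sq_abs t).symm
        _ < Real.sqrt (p - Real.sqrt q) ^ 2 :=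
            pow_lt_pow_left₀ h1 (abs_nonneg t) (by norm_num)
        _ = p - Real.sqrt q := sq_sqrt (by linarith [Real.sqrt_nonneg q])
    linarith
  have wpos : ∀ t ∈ Set.Ioo (-Real.sqrt (p - Real.sqrt q)) (Real.sqrt (p - Real.sqrt q)),
      0 < (p - t ^ 2) ^ 2 - q := by
    intro t ht
    have h3 := key t ht
    nlinarith [sq_sqrt hq0, Real.sqrt_nonneg q]
  have hpos : ∀ t ∈ Set.Ioo (-Real.sqrt (p - Real.sqrt q)) (Real.sqrt (p - Real.sqrt q)),
      0 < h t := by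
    intro t ht
    rw [hdef t]
    apply Real.sqrt_pos.mpr
    have := key t ht
    have := Real.sqrt_nonneg ((p - t ^ 2) ^ 2 - q)
    have := Real.sqrt_nonneg q
    linarith
  have hyh : ∀ t ∈ Set.Ioo (-Real.sqrt (p - Real.sqrt q)) (Real.sqrt (p - Real.sqrt q)),
      HasDerivAt h ((-1 : ℝ) * t * h t / Real.sqrt ((p - t ^ 2) ^ 2 - q)) t := by
    intro t ht
    have hw0 := wpos t ht
    have hWpos : 0 < Real.sqrt ((p - t ^ 2) ^ 2 - q) := Real.sqrt_pos.mpr hw0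
    have hW2 : Real.sqrt ((p - t ^ 2) ^ 2 - q) ^ 2 = (p - t ^ 2) ^ 2 - q := sq_sqrt hw0.le
    have hfpos : 0 < p - t ^ 2 + Real.sqrt ((p - t ^ 2) ^ 2 - q) := by
      have := key t ht
      have := Real.sqrt_nonneg q
      linarith
    have hu : HasDerivAt (fun x : ℝ => p - x ^ 2) (-(2 * t ^ 1)) t := by
      simpa using ((hasDerivAt_pow 2 t).const_sub p)
    have hw : HasDerivAt (fun x : ℝ => (p - x ^ 2) ^ 2 - q)
        ((2 : ℕ) * (p - t ^ 2) ^ 1 * (-(2 * t ^ 1))) t := (hu.pow 2).sub_const q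
    have hsw : HasDerivAt (fun x : ℝ => Real.sqrt ((p - x ^ 2) ^ 2 - q))
        (((2 : ℕ) * (p - t ^ 2) ^ 1 * (-(2 * t ^ 1)))
          / (2 * Real.sqrt ((p - t ^ 2) ^ 2 - q))) t := hw.sqrt hw0.ne'
    have hf : HasDerivAt (fun x : ℝ => p - x ^ 2 + Real.sqrt ((p - x ^ 2) ^ 2 - q))
        (-(2 * t ^ 1) + ((2 : ℕ) * (p - t ^ 2) ^ 1 * (-(2 * t ^ 1)))
          / (2 * Real.sqrt ((p - t ^ 2) ^ 2 - q))) t := hu.add hsw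
    have hh0 := hf.sqrt hfpos.ne'
    have hfun : h = fun x => Real.sqrt (p - x ^ 2 + Real.sqrt ((p - x ^ 2) ^ 2 - q)) :=
      funext hdef
    rw [hfun]
    convert hh0 using 1
    set W := Real.sqrt ((p - t ^ 2) ^ 2 - q) with hWdef
    set H := Real.sqrt (p - t ^ 2 + W) with hHdef
    have hHpos : 0 < H := Real.sqrt_pos.mpr hfpos
    have hH2 : H ^ 2 = p - t ^ 2 + W := sq_sqrt hfpos.le
    field_simp
    push_cast
    linear_combination (-2 * t) * hH2
  have hyi : ∀ t ∈ Set.Ioo (-Real.sqrt (p - Real.sqrt q)) (Real.sqrt (p - Real.sqrt q)),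
      HasDerivAt (fun x => (h x)⁻¹)
        ((1 : ℝ) * t * (h t)⁻¹ / Real.sqrt ((p - t ^ 2) ^ 2 - q)) t := by
    intro t ht
    have hh := (hyh t ht).inv (hpos t ht).ne'
    refine hh.congr_deriv ?_
    have hWpos : 0 < Real.sqrt ((p - t ^ 2) ^ 2 - q) := Real.sqrt_pos.mpr (wpos t ht)
    have := (hpos t ht).ne'
    field_simp
  intro s hs
  constructor
  · exact aux_ode p q hq0 hp (-1) (by norm_num) h hyh s hs
  · simpa using aux_ode p q hq0 hp 1 (by norm_num) (fun t => (h t)⁻¹) hyi s hs
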